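/- Let (X, ℬ, μ) be a probability space, T : X → X a measure-preserving transformation, and f ∈ L¹(μ). Then Ā = limsup_{k→∞} A_k f is finite a.e., integrable, and satisfies ∫ Ā dμ ≤ ∫ f dμ. -/

import Mathlib

open MeasureTheory Filter Set

namespace BirkhoffAux

lemma ereal_eq_of_forall_lt_iff {a b : EReal}
    (h : ∀ α : ℝ, ((α : EReal) < a ↔ (α : EReal) < b)) : a = b := by
  by_contra hne
  rcases lt_or_gt_of_ne hne with hlt | hlt
  · obtain ⟨r, h1, h2⟩ := EReal.exists_between_coe_real hlt
    exact absurd h1 (not_lt_of_gt ((h r).mpr h2))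
  · obtain ⟨r, h1, h2⟩ := EReal.exists_between_coe_real hlt
    exact absurd h1 (not_lt_of_gt ((h r).mp h2))

lemma ereal_eq_top_of_forall_le {a : EReal} (h : ∀ r : ℝ, (r : EReal) ≤ a) : a = ⊤ := by
  induction a with
  | bot => simpa using (h 0)
  | coe t =>
    have := h (t + 1)
    rw [EReal.coe_le_coe_iff] at this
    linarith
  | top => rfl

lemma lt_limsup_iff_freq (u : ℕ → ℝ) (α : ℝ) :
    (α : EReal) < limsup (fun k => ((u k : ℝ) : EReal)) atTop ↔
      ∃ β : ℝ, α < β ∧ ∃ᶠ k in atTop, β < u k := by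
  constructor
  · intro h
    obtain ⟨β, h1, h2⟩ := EReal.exists_between_coe_real h
    refine ⟨β, by exact_mod_cast h1, ?_⟩
    have := frequently_lt_of_lt_limsup (u := fun k => ((u k : ℝ) : EReal)) (by isBoundedDefault) h2
    exact this.mono fun k hk => by simpa using EReal.coe_lt_coe_iff.mp hk
  · rintro ⟨β, h1, h2⟩
    have : (β : EReal) ≤ limsup (fun k => ((u k : ℝ) : EReal)) atTop := by
      refine le_limsup_of_frequently_le ?_ (by isBoundedDefault)
      exact h2.mono fun k hk => by exact_mod_cast hk.le
    exact lt_of_lt_of_le (by exact_mod_cast h1) this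

end BirkhoffAux

namespace BirkhoffAux
open scoped BigOperators

variable {X : Type*} (T : X → X) (f : X → ℝ)

/-- The limsup of Birkhoff averages, in `EReal`. -/
noncomputable def G (x : X) : EReal :=
  limsup (fun k => ((birkhoffAverage ℝ T f k x : ℝ) : EReal)) atTop

lemma lt_G_iff (x : X) (α : ℝ) :
    (α : EReal) < G T f x ↔
      ∃ β : ℝ, α < β ∧ ∃ᶠ k in atTop, β * k < birkhoffSum T f k x := by
  rw [G, lt_limsup_iff_freq]
  constructor
  · rintro ⟨β, h1, h2⟩
    refine ⟨β, h1, ?_⟩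
    rw [frequently_atTop] at h2 ⊢
    intro N
    obtain ⟨k, hk, hβ⟩ := h2 (max N 1)
    refine ⟨k, le_trans (le_max_left _ _) hk, ?_⟩
    have hk1 : (1:ℕ) ≤ k := le_trans (le_max_right _ _) hk
    have hkpos : (0:ℝ) < k := by exact_mod_cast hk1
    rw [birkhoffAverage, smul_eq_mul] at hβ
    calc β * k < ((k:ℝ)⁻¹ * birkhoffSum T f k x) * k := by
          exact mul_lt_mul_of_pos_right hβ hkpos
      _ = birkhoffSum T f k x := by field_simp
  · rintro ⟨β, h1, h2⟩
    refine ⟨β, h1, ?_⟩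
    rw [frequently_atTop] at h2 ⊢
    intro N
    obtain ⟨k, hk, hβ⟩ := h2 (max N 1)
    refine ⟨k, le_trans (le_max_left _ _) hk, ?_⟩
    have hk1 : (1:ℕ) ≤ k := le_trans (le_max_right _ _) hk
    have hkpos : (0:ℝ) < k := by exact_mod_cast hk1
    rw [birkhoffAverage, smul_eq_mul]
    rw [lt_inv_mul_iff₀ hkpos]
    linarith [hβ, mul_comm β (k:ℝ)]

lemma G_comp (x : X) : G T f (T x) = G T f x := by
  apply ereal_eq_of_forall_lt_iff
  intro α
  rw [lt_G_iff, lt_G_iff]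
  constructor
  · rintro ⟨β, h1, h2⟩
    refine ⟨(α + β)/2, by linarith, ?_⟩
    rw [frequently_atTop] at h2 ⊢
    intro N
    -- choose k large with β * k < S_k f (T x), then use m = k+1
    obtain ⟨k₀, hk₀⟩ : ∃ k₀ : ℕ, ∀ k ≥ k₀, (α+β)/2 - f x ≤ (β - (α+β)/2) * k := by
      rcases exists_nat_ge (((α+β)/2 - f x) / (β - (α+β)/2)) with ⟨k₀, hk₀⟩
      refine ⟨k₀, fun k hk => ?_⟩
      have hpos : (0:ℝ) < β - (α+β)/2 := by linarith
      rw [div_le_iff₀ hpos] at hk₀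
      have : (k₀:ℝ) ≤ k := by exact_mod_cast hk
      nlinarith
    obtain ⟨k, hk, hβ⟩ := h2 (max N k₀)
    refine ⟨k + 1, le_trans (le_max_left _ _) (le_trans hk (Nat.le_succ _)), ?_⟩
    rw [birkhoffSum_succ' T f k x]
    have := hk₀ k (le_trans (le_max_right _ _) hk)
    push_cast
    linarith
  · rintro ⟨β, h1, h2⟩
    refine ⟨(α + β)/2, by linarith, ?_⟩
    rw [frequently_atTop] at h2 ⊢
    intro N
    obtain ⟨k₀, hk₀⟩ : ∃ k₀ : ℕ, ∀ k ≥ k₀, f x - β ≤ (β - (α+β)/2) * k := by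
      rcases exists_nat_ge ((f x - β) / (β - (α+β)/2)) with ⟨k₀, hk₀⟩
      refine ⟨k₀, fun k hk => ?_⟩
      have hpos : (0:ℝ) < β - (α+β)/2 := by linarith
      rw [div_le_iff₀ hpos] at hk₀
      have : (k₀:ℝ) ≤ k := by exact_mod_cast hk
      nlinarith
    obtain ⟨m, hm, hβ⟩ := h2 (max (N+1) (k₀+1))
    obtain ⟨k, rfl⟩ : ∃ k, m = k + 1 :=
      Nat.exists_eq_add_of_le' (le_trans (le_trans (Nat.le_add_left 1 N) (le_max_left _ _)) hm)
    refine ⟨k, ?_, ?_⟩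
    · have := le_trans (le_max_left _ _) hm; omega
    · rw [birkhoffSum_succ' T f k x] at hβ
      have hkk₀ : k₀ ≤ k := by have := le_trans (le_max_right _ _) hm; omega
      have := hk₀ k hkk₀
      push_cast at hβ ⊢
      linarith

end BirkhoffAux

set_option linter.unusedSectionVars false

namespace BirkhoffAux

variable {X : Type*} [MeasurableSpace X] {μ : Measure X}

/-- running maximum `max (0, S₁φ, …, S_Nφ)` of Birkhoff sums. -/
noncomputable def Mp (T : X → X) (φ : X → ℝ) : ℕ → X → ℝ
  | 0 => fun _ => 0
  | (N+1) => fun x => max (birkhoffSum T φ (N+1) x) (Mp T φ N x)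

variable {T : X → X} {φ : X → ℝ}

lemma Mp_nonneg (N : ℕ) (x : X) : 0 ≤ Mp T φ N x := by
  induction N with
  | zero => exact le_refl 0
  | succ N ih => exact le_trans ih (le_max_right _ _)

lemma Mp_succ_le (N : ℕ) (x : X) : Mp T φ N x ≤ Mp T φ (N+1) x := le_max_right _ _

lemma Mp_mono {N M : ℕ} (h : N ≤ M) (x : X) : Mp T φ N x ≤ Mp T φ M x := by
  induction M with
  | zero => simp_all
  | succ M ih =>
    rcases Nat.lt_or_ge N (M+1) with h' | h'
    · exact le_trans (ih (Nat.lt_succ_iff.mp h')) (Mp_succ_le M x)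
    · have : N = M + 1 := le_antisymm h h'
      subst this; exact le_refl _

lemma birkhoffSum_le_Mp {j N : ℕ} (h : j ≤ N) (x : X) :
    birkhoffSum T φ j x ≤ Mp T φ N x := by
  rcases Nat.eq_zero_or_pos j with rfl | hj
  · simpa [birkhoffSum] using Mp_nonneg N x
  · obtain ⟨j', rfl⟩ : ∃ j', j = j' + 1 := Nat.exists_eq_add_of_le' hj
    exact le_trans (le_max_left _ _) (Mp_mono h x)

lemma Mp_eq_birkhoffSum_of_pos {N : ℕ} {x : X} (h : 0 < Mp T φ N x) :
    ∃ k, 1 ≤ k ∧ k ≤ N ∧ Mp T φ N x = birkhoffSum T φ k x := by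
  induction N with
  | zero => simp [Mp] at h
  | succ N ih =>
    rcases le_or_gt (Mp T φ (N+1) x) (Mp T φ N x) with h' | h'
    · have heq : Mp T φ (N+1) x = Mp T φ N x := le_antisymm h' (Mp_succ_le N x)
      obtain ⟨k, h1, h2, h3⟩ := ih (heq ▸ h)
      exact ⟨k, h1, le_trans h2 (Nat.le_succ _), heq.trans h3⟩
    · have : Mp T φ (N+1) x = birkhoffSum T φ (N+1) x := by
        rcases max_cases (birkhoffSum T φ (N+1) x) (Mp T φ N x) with ⟨h1, _⟩ | ⟨h1, h2⟩
        · exact h1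
        · exact absurd (h1 ▸ h') (lt_irrefl _)
      exact ⟨N+1, Nat.succ_le_succ (Nat.zero_le _), le_refl _, this⟩

lemma hopf_pointwise {N : ℕ} {x : X} (h : 0 < Mp T φ N x) :
    Mp T φ N x ≤ φ x + Mp T φ N (T x) := by
  obtain ⟨k, hk1, hkN, heq⟩ := Mp_eq_birkhoffSum_of_pos h
  obtain ⟨j, rfl⟩ : ∃ j, k = j + 1 := Nat.exists_eq_add_of_le' hk1
  rw [heq, birkhoffSum_succ' T φ j x]
  exact add_le_add le_rfl (birkhoffSum_le_Mp (by omega) (T x))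

lemma measurable_birkhoffSum (hTm : Measurable T) (hφm : Measurable φ) (k : ℕ) :
    Measurable (fun x => birkhoffSum T φ k x) := by
  unfold birkhoffSum
  exact Finset.measurable_sum _ fun i _ => hφm.comp (hTm.iterate i)

lemma measurable_Mp (hTm : Measurable T) (hφm : Measurable φ) (N : ℕ) :
    Measurable (Mp T φ N) := by
  induction N with
  | zero => exact measurable_const
  | succ N ih => exact (measurable_birkhoffSum hTm hφm (N+1)).max ih

lemma integrable_birkhoffSum (hT : MeasurePreserving T μ μ) (hφ : Integrable φ μ) (k : ℕ) :
    Integrable (fun x => birkhoffSum T φ k x) μ := by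
  unfold birkhoffSum
  apply integrable_finset_sum
  intro i _
  have h1 : Integrable φ (Measure.map T^[i] μ) := by rw [(hT.iterate i).map_eq]; exact hφ
  exact (integrable_map_measure h1.aestronglyMeasurable
      (hT.iterate i).measurable.aemeasurable).mp h1

lemma integrable_Mp (hT : MeasurePreserving T μ μ) (hφ : Integrable φ μ) (N : ℕ) :
    Integrable (Mp T φ N) μ := by
  induction N with
  | zero => simpa [Mp] using integrable_const (0:ℝ)
  | succ N ih =>
    have := (integrable_birkhoffSum hT hφ (N+1)).sup ih
    exact this

end BirkhoffAux

namespace BirkhoffAux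

variable {X : Type*} [MeasurableSpace X] {μ : Measure X} {T : X → X} {φ : X → ℝ}

lemma hopf_finite (hT : MeasurePreserving T μ μ) (hφm : Measurable φ)
    (hφ : Integrable φ μ) [IsFiniteMeasure μ] (N : ℕ) :
    0 ≤ ∫ x in {x | 0 < Mp T φ N x}, φ x ∂μ := by
  set E := {x | 0 < Mp T φ N x} with hE
  have hEm : MeasurableSet E := measurableSet_lt measurable_const (measurable_Mp hT.measurable hφm N)
  have hMpi : Integrable (Mp T φ N) μ := integrable_Mp hT hφ N
  have hMpTi : Integrable (fun x => Mp T φ N (T x)) μ := by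
    have h1 : Integrable (Mp T φ N) (Measure.map T μ) := by rw [hT.map_eq]; exact hMpi
    exact (integrable_map_measure h1.aestronglyMeasurable hT.measurable.aemeasurable).mp h1
  have hsubint : IntegrableOn (fun x => Mp T φ N x - Mp T φ N (T x)) E μ :=
    (hMpi.sub hMpTi).integrableOn
  have key : ∫ x in E, (Mp T φ N x - Mp T φ N (T x)) ∂μ ≤ ∫ x in E, φ x ∂μ := by
    apply setIntegral_mono_on hsubint hφ.integrableOn hEm
    intro x hx
    have := hopf_pointwise (hx : 0 < Mp T φ N x)
    linarith
  have h1 : ∫ x in E, Mp T φ N x ∂μ = ∫ x, Mp T φ N x ∂μ := by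
    rw [← integral_add_compl hEm hMpi]
    have : ∫ x in Eᶜ, Mp T φ N x ∂μ = 0 := by
      rw [setIntegral_congr_fun hEm.compl (g := fun _ => (0:ℝ))]
      · simp
      · intro x hx
        have hle : Mp T φ N x ≤ 0 := not_lt.mp hx
        exact le_antisymm hle (Mp_nonneg N x)
    rw [this, add_zero]
  have h2 : ∫ x in E, Mp T φ N (T x) ∂μ ≤ ∫ x, Mp T φ N (T x) ∂μ := by
    apply setIntegral_le_integral hMpTi
    exact Eventually.of_forall fun x => Mp_nonneg N (T x)
  have hasm : AEStronglyMeasurable (Mp T φ N) (Measure.map T μ) := by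
    rw [hT.map_eq]; exact hMpi.aestronglyMeasurable
  have h3 : ∫ x, Mp T φ N (T x) ∂μ = ∫ x, Mp T φ N x ∂μ := by
    calc ∫ x, Mp T φ N (T x) ∂μ = ∫ y, Mp T φ N y ∂(Measure.map T μ) :=
          (integral_map hT.measurable.aemeasurable hasm).symm
      _ = ∫ y, Mp T φ N y ∂μ := by rw [hT.map_eq]
  have h4 : ∫ x in E, (Mp T φ N x - Mp T φ N (T x)) ∂μ
      = ∫ x in E, Mp T φ N x ∂μ - ∫ x in E, Mp T φ N (T x) ∂μ :=
    integral_sub hMpi.integrableOn hMpTi.integrableOn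
  have : 0 ≤ ∫ x in E, (Mp T φ N x - Mp T φ N (T x)) ∂μ := by
    rw [h4, h1]
    have := h2.trans_eq h3
    linarith
  linarith

lemma hopf (hT : MeasurePreserving T μ μ) (hφm : Measurable φ)
    (hφ : Integrable φ μ) [IsFiniteMeasure μ] :
    0 ≤ ∫ x in {x | ∃ k, 0 < birkhoffSum T φ k x}, φ x ∂μ := by
  have hMm : ∀ N, Measurable (Mp T φ N) := measurable_Mp hT.measurable hφm
  have hEm : ∀ N : ℕ, MeasurableSet {x | 0 < Mp T φ N x} :=
    fun N => measurableSet_lt measurable_const (hMm N)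
  have hmono : Monotone (fun N : ℕ => {x | 0 < Mp T φ N x}) := by
    intro N M hNM x hx
    exact lt_of_lt_of_le hx (Mp_mono hNM x)
  have hunion : (⋃ N, {x | 0 < Mp T φ N x}) = {x | ∃ k, 0 < birkhoffSum T φ k x} := by
    ext x
    simp only [mem_iUnion, mem_setOf_eq]
    constructor
    · rintro ⟨N, hN⟩
      obtain ⟨k, _, _, heq⟩ := Mp_eq_birkhoffSum_of_pos hN
      exact ⟨k, heq ▸ hN⟩
    · rintro ⟨k, hk⟩
      exact ⟨k, lt_of_lt_of_le hk (birkhoffSum_le_Mp le_rfl x)⟩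
  have hio : IntegrableOn φ (⋃ N, {x | 0 < Mp T φ N x}) μ := by
    rw [hunion]; exact hφ.integrableOn
  have htend := tendsto_setIntegral_of_monotone hEm hmono hio
  rw [hunion] at htend
  exact ge_of_tendsto htend (Eventually.of_forall fun N => hopf_finite hT hφm hφ N)

lemma iterate_mem_of_invariant {A : Set X} (hAinv : T ⁻¹' A = A) {x : X} (hx : x ∈ A) (i : ℕ) :
    T^[i] x ∈ A := by
  induction i with
  | zero => exact hx
  | succ i ih =>
    rw [Function.iterate_succ_apply']
    have h2 : T^[i] x ∈ T ⁻¹' A := by rw [hAinv]; exact ih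
    exact h2

lemma iterate_not_mem_of_invariant {A : Set X} (hAinv : T ⁻¹' A = A) {x : X} (hx : x ∉ A) (i : ℕ) :
    T^[i] x ∉ A := by
  induction i with
  | zero => exact hx
  | succ i ih =>
    rw [Function.iterate_succ_apply']
    intro hmem
    have h2 : T^[i] x ∈ T ⁻¹' A := hmem
    rw [hAinv] at h2
    exact ih h2

lemma alpha_bound (hT : MeasurePreserving T μ μ) {f : X → ℝ} (hfm : Measurable f)
    (hf : Integrable f μ) [IsFiniteMeasure μ]
    {A : Set X} (hA : MeasurableSet A) (hAinv : T ⁻¹' A = A) (α : ℝ)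
    (hsub : ∀ x ∈ A, ∃ k : ℕ, α * k < birkhoffSum T f k x) :
    α * (μ A).toReal ≤ ∫ x in A, f x ∂μ := by
  set φ := A.indicator (fun y => f y - α) with hφ
  have hφm : Measurable φ := (hfm.sub measurable_const).indicator hA
  have hφi : Integrable φ μ := (hf.sub (integrable_const α)).indicator hA
  have hSφ_mem : ∀ x ∈ A, ∀ k : ℕ, birkhoffSum T φ k x = birkhoffSum T f k x - α * k := by
    intro x hx k
    unfold birkhoffSum
    rw [show ∑ i ∈ Finset.range k, φ (T^[i] x) = ∑ i ∈ Finset.range k, (f (T^[i] x) - α) from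
      Finset.sum_congr rfl fun i _ => by
        rw [hφ, Set.indicator_of_mem (iterate_mem_of_invariant hAinv hx i)]]
    rw [Finset.sum_sub_distrib, Finset.sum_const, Finset.card_range]
    push_cast; ring_nf
  have hSφ_not : ∀ x ∉ A, ∀ k : ℕ, birkhoffSum T φ k x = 0 := by
    intro x hx k
    unfold birkhoffSum
    rw [Finset.sum_eq_zero]
    intro i _
    rw [hφ, Set.indicator_of_notMem (iterate_not_mem_of_invariant hAinv hx i)]
  have hEeq : {x | ∃ k, 0 < birkhoffSum T φ k x} = A := by
    ext x
    simp only [mem_setOf_eq]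
    constructor
    · rintro ⟨k, hk⟩
      by_contra hx
      rw [hSφ_not x hx k] at hk
      exact lt_irrefl 0 hk
    · intro hx
      obtain ⟨k, hk⟩ := hsub x hx
      exact ⟨k, by rw [hSφ_mem x hx k]; linarith⟩
  have h0 := hopf hT hφm hφi
  rw [hEeq] at h0
  have h1 : ∫ x in A, φ x ∂μ = ∫ x in A, (f x - α) ∂μ := by
    apply setIntegral_congr_fun hA
    intro x hx
    exact Set.indicator_of_mem hx _
  have h2 : ∫ x in A, (f x - α) ∂μ = ∫ x in A, f x ∂μ - α * (μ A).toReal := by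
    rw [integral_sub hf.integrableOn (integrable_const α).integrableOn, setIntegral_const]
    simp [mul_comm, Measure.real]
  rw [h1, h2] at h0
  linarith

end BirkhoffAux

namespace BirkhoffAux

variable {X : Type*} [MeasurableSpace X] {μ : Measure X} {T : X → X} {f : X → ℝ}

lemma birkhoffSum_neg' (T : X → X) (f : X → ℝ) (k : ℕ) (x : X) :
    birkhoffSum T (-f) k x = - birkhoffSum T f k x := by
  unfold birkhoffSum
  rw [← Finset.sum_neg_distrib]
  rfl

lemma birkhoffAverage_neg' (T : X → X) (f : X → ℝ) (k : ℕ) (x : X) :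
    birkhoffAverage ℝ T (-f) k x = - birkhoffAverage ℝ T f k x := by
  unfold birkhoffAverage
  rw [birkhoffSum_neg', smul_neg]

lemma measurable_G (hTm : Measurable T) (hfm : Measurable f) : Measurable (G T f) := by
  apply Measurable.limsup
  intro k
  apply measurable_coe_real_ereal.comp
  have : Measurable fun x => birkhoffSum T f k x := measurable_birkhoffSum hTm hfm k
  unfold birkhoffAverage
  exact this.const_smul ((k:ℝ)⁻¹)

lemma neg_G_le (T : X → X) (f : X → ℝ) (x : X) : - G T f x ≤ G T (-f) x := by
  rw [G, G]
  have h1 : (fun k => ((birkhoffAverage ℝ T (-f) k x : ℝ) : EReal))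
      = - fun k => ((birkhoffAverage ℝ T f k x : ℝ) : EReal) := by
    funext k
    simp [birkhoffAverage_neg']
  rw [h1, EReal.limsup_neg]
  rw [EReal.neg_le_neg_iff]
  exact liminf_le_limsup (u := fun k => ((birkhoffAverage ℝ T f k x : ℝ) : EReal))
    (f := atTop) (by isBoundedDefault) (by isBoundedDefault)

lemma G_top_null (hT : MeasurePreserving T μ μ) [IsProbabilityMeasure μ]
    (hfm : Measurable f) (hf : Integrable f μ) :
    μ {x | G T f x = ⊤} = 0 := by
  set C := ∫ x, |f x| ∂μ with hC
  have hbound : ∀ α : ℝ, 0 < α → α * (μ {x | (α : EReal) < G T f x}).toReal ≤ C := by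
    intro α hα
    set A := {x | (α : EReal) < G T f x} with hA
    have hAm : MeasurableSet A := measurableSet_lt measurable_const (measurable_G hT.measurable hfm)
    have hAinv : T ⁻¹' A = A := by
      ext x
      simp only [mem_preimage, hA, mem_setOf_eq, G_comp]
    have hsub : ∀ x ∈ A, ∃ k : ℕ, α * k < birkhoffSum T f k x := by
      intro x hx
      obtain ⟨β, hβ1, hβ2⟩ := (lt_G_iff T f x α).mp hx
      obtain ⟨k, hk1, hk2⟩ := (frequently_atTop.mp hβ2) 1
      exact ⟨k, lt_of_le_of_lt (by
        have : (0:ℝ) < k := by exact_mod_cast hk1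
        nlinarith) hk2⟩
    have h1 := alpha_bound hT hfm hf hAm hAinv α hsub
    have h2 : ∫ x in A, f x ∂μ ≤ C := by
      calc ∫ x in A, f x ∂μ ≤ ∫ x in A, |f x| ∂μ :=
            setIntegral_mono_on hf.integrableOn hf.abs.integrableOn hAm fun x _ => le_abs_self _
        _ ≤ C := setIntegral_le_integral hf.abs (Eventually.of_forall fun x => abs_nonneg _)
    linarith
  have hsubset : ∀ α : ℝ, {x | G T f x = ⊤} ⊆ {x | (α : EReal) < G T f x} := by
    intro α x hx
    simp only [mem_setOf_eq] at hx ⊢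
    rw [hx]
    exact EReal.coe_lt_top α
  by_contra hne
  set m := (μ {x | G T f x = ⊤}).toReal with hm
  have hmpos : 0 < m := ENNReal.toReal_pos hne (measure_ne_top μ _)
  have hCnn : 0 ≤ C := integral_nonneg fun x => abs_nonneg _
  have := hbound ((C + 1)/m) (by positivity)
  have hmono : m ≤ (μ {x | (((C+1)/m : ℝ) : EReal) < G T f x}).toReal := by
    apply ENNReal.toReal_mono (measure_ne_top μ _)
    exact measure_mono (hsubset _)
  have hq : (C + 1) ≤ C := by
    calc C + 1 = ((C+1)/m) * m := by field_simp
      _ ≤ ((C+1)/m) * (μ {x | (((C+1)/m : ℝ) : EReal) < G T f x}).toReal := by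
          apply mul_le_mul_of_nonneg_left hmono (by positivity)
      _ ≤ C := this
  linarith

lemma G_bot_null (hT : MeasurePreserving T μ μ) [IsProbabilityMeasure μ]
    (hfm : Measurable f) (hf : Integrable f μ) :
    μ {x | G T f x = ⊥} = 0 := by
  have hsub : {x | G T f x = ⊥} ⊆ {x | G T (-f) x = ⊤} := by
    intro x hx
    simp only [mem_setOf_eq] at hx ⊢
    apply ereal_eq_top_of_forall_le
    intro r
    have hlt : G T f x < ((-r : ℝ) : EReal) := by rw [hx]; exact bot_lt_iff_ne_bot.mpr (by simp)
    have hev := eventually_lt_of_limsup_lt hlt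
    rw [G]
    apply le_limsup_of_frequently_le ?_ (by isBoundedDefault)
    apply hev.frequently.mono
    intro k hk
    rw [birkhoffAverage_neg']
    have h2 : birkhoffAverage ℝ T f k x < -r := EReal.coe_lt_coe_iff.mp hk
    have h3 : r ≤ -(birkhoffAverage ℝ T f k x) := by linarith
    exact_mod_cast EReal.coe_le_coe_iff.mpr h3
  have := G_top_null hT hfm.neg hf.neg
  exact measure_mono_null hsub this

end BirkhoffAux

namespace BirkhoffAux

variable {X : Type*} [MeasurableSpace X] {μ : Measure X} {T : X → X} {f : X → ℝ}

/-- the slice `{ nε < G ≤ (n+1)ε }`. -/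
def slice (T : X → X) (f : X → ℝ) (ε : ℝ) (n : ℤ) : Set X :=
  {x | (((n : ℝ) * ε : ℝ) : EReal) < G T f x ∧ G T f x ≤ ((((n : ℝ) + 1) * ε : ℝ) : EReal)}

lemma slice_meas (hTm : Measurable T) (hfm : Measurable f) (ε : ℝ) (n : ℤ) :
    MeasurableSet (slice T f ε n) := by
  have hG := measurable_G (T := T) (f := f) hTm hfm
  have heq : slice T f ε n
      = G T f ⁻¹' (Set.Ioi (((n : ℝ) * ε : ℝ) : EReal) ∩ Set.Iic ((((n : ℝ) + 1) * ε : ℝ) : EReal)) := by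
    ext x
    simp [slice, Set.mem_Ioi, Set.mem_Iic]
  rw [heq]
  exact hG (measurableSet_Ioi.inter measurableSet_Iic)

lemma slice_disj {ε : ℝ} (hε : 0 < ε) : Pairwise (Function.onFun Disjoint (slice T f ε)) := by
  intro m n hmn
  wlog h : m < n generalizing m n
  · exact (this hmn.symm (by omega)).symm
  rw [Function.onFun, Set.disjoint_left]
  rintro x ⟨_, hx2⟩ ⟨hy1, _⟩
  have h1 : ((m : ℝ) + 1) * ε ≤ (n : ℝ) * ε := by
    have : (m : ℝ) + 1 ≤ (n : ℝ) := by exact_mod_cast h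
    nlinarith
  have h2 : ((((m:ℝ)+1)*ε : ℝ) : EReal) ≤ (((n:ℝ)*ε : ℝ) : EReal) := EReal.coe_le_coe_iff.mpr h1
  exact absurd ((hx2.trans h2).trans_lt hy1) (lt_irrefl _)

lemma slice_inv (T : X → X) (f : X → ℝ) (ε : ℝ) (n : ℤ) :
    T ⁻¹' slice T f ε n = slice T f ε n := by
  ext x
  simp only [slice, mem_preimage, mem_setOf_eq, G_comp]

lemma slice_union {ε : ℝ} (hε : 0 < ε) :
    (⋃ n : ℤ, slice T f ε n) = {x | G T f x ≠ ⊥ ∧ G T f x ≠ ⊤} := by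
  ext x
  simp only [mem_iUnion, mem_setOf_eq, slice]
  constructor
  · rintro ⟨n, h1, h2⟩
    constructor
    · exact ne_bot_of_gt h1
    · exact ne_top_of_le_ne_top (EReal.coe_ne_top _) h2
  · rintro ⟨hbot, htop⟩
    set t := (G T f x).toReal with ht
    have hco : ((t : ℝ) : EReal) = G T f x := EReal.coe_toReal htop hbot
    refine ⟨⌈t/ε⌉ - 1, ?_, ?_⟩
    · rw [← hco, EReal.coe_lt_coe_iff]
      push_cast
      have h1 : (⌈t/ε⌉ : ℝ) < t/ε + 1 := Int.ceil_lt_add_one _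
      have := mul_lt_mul_of_pos_right (by linarith : (⌈t/ε⌉ : ℝ) - 1 < t/ε) hε
      calc ((⌈t/ε⌉ : ℝ) - 1) * ε < t/ε * ε := this
        _ = t := by field_simp
    · rw [← hco, EReal.coe_le_coe_iff]
      push_cast
      have h1 : t/ε ≤ (⌈t/ε⌉ : ℝ) := Int.le_ceil _
      have := mul_le_mul_of_nonneg_right h1 hε.le
      calc t = t/ε * ε := by field_simp
        _ ≤ (⌈t/ε⌉ : ℝ) * ε := this
        _ = ((⌈t/ε⌉ : ℝ) - 1 + 1) * ε := by ring
  done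

lemma slice_union_ae (hT : MeasurePreserving T μ μ) [IsProbabilityMeasure μ]
    (hfm : Measurable f) (hf : Integrable f μ) {ε : ℝ} (hε : 0 < ε) :
    (⋃ n : ℤ, slice T f ε n) =ᵐ[μ] Set.univ := by
  rw [ae_eq_univ, slice_union hε]
  have : {x | G T f x ≠ ⊥ ∧ G T f x ≠ ⊤}ᶜ ⊆ {x | G T f x = ⊥} ∪ {x | G T f x = ⊤} := by
    intro x hx
    simp only [mem_compl_iff, mem_setOf_eq, not_and_or, not_ne_iff] at hx
    exact hx.imp (fun h => h) (fun h => h)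
  apply measure_mono_null this
  exact measure_union_null (G_bot_null hT hfm hf) (G_top_null hT hfm hf)

lemma slice_toReal_bounds {ε : ℝ} {n : ℤ} {x : X} (hx : x ∈ slice T f ε n) :
    (n : ℝ) * ε < (G T f x).toReal ∧ (G T f x).toReal ≤ ((n : ℝ) + 1) * ε := by
  obtain ⟨h1, h2⟩ := hx
  have hbot : G T f x ≠ ⊥ := ne_bot_of_gt h1
  have htop : G T f x ≠ ⊤ := ne_top_of_le_ne_top (EReal.coe_ne_top _) h2
  have hco : (((G T f x).toReal : ℝ) : EReal) = G T f x := EReal.coe_toReal htop hbot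
  rw [← hco] at h1 h2
  exact ⟨EReal.coe_lt_coe_iff.mp h1, EReal.coe_le_coe_iff.mp h2⟩

lemma slice_lower (hT : MeasurePreserving T μ μ) [IsProbabilityMeasure μ]
    (hfm : Measurable f) (hf : Integrable f μ) (ε : ℝ) (n : ℤ) :
    (n : ℝ) * ε * (μ (slice T f ε n)).toReal ≤ ∫ x in slice T f ε n, f x ∂μ := by
  apply alpha_bound hT hfm hf (slice_meas hT.measurable hfm ε n) (slice_inv T f ε n)
  intro x hx
  obtain ⟨β, hβ1, hβ2⟩ := (lt_G_iff T f x ((n:ℝ)*ε)).mp hx.1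
  obtain ⟨k, hk1, hk2⟩ := (frequently_atTop.mp hβ2) 1
  refine ⟨k, lt_of_le_of_lt ?_ hk2⟩
  have : (0:ℝ) < k := by exact_mod_cast hk1
  nlinarith

lemma slice_upper (hT : MeasurePreserving T μ μ) [IsProbabilityMeasure μ]
    (hfm : Measurable f) (hf : Integrable f μ) {ε : ℝ} (hε : 0 < ε) (n : ℤ) :
    ∫ x in slice T f ε n, f x ∂μ ≤ ((n : ℝ) + 2) * ε * (μ (slice T f ε n)).toReal := by
  have key := alpha_bound hT hfm.neg hf.neg (slice_meas hT.measurable hfm ε n)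
      (slice_inv T f ε n) (-(((n:ℝ) + 2) * ε)) ?_
  · simp only [Pi.neg_apply, integral_neg] at key
    linarith
  · intro x hx
    have hG' : ((-(((n:ℝ)+2)*ε) : ℝ) : EReal) < G T (-f) x := by
      have h1 : -G T f x ≤ G T (-f) x := neg_G_le T f x
      have h2 : (-((((n:ℝ)+1))*ε : ℝ) : EReal) ≤ -G T f x := by
        rw [← EReal.coe_neg] at *
        rw [show (-((((n:ℝ)+1))*ε) : ℝ) = -((((n:ℝ)+1))*ε) from rfl]
        rw [EReal.coe_neg, EReal.neg_le_neg_iff]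
        exact hx.2
      have h3 : ((-(((n:ℝ)+2)*ε) : ℝ) : EReal) < ((-(((n:ℝ)+1)*ε) : ℝ) : EReal) := by
        rw [EReal.coe_lt_coe_iff]
        nlinarith
      calc ((-(((n:ℝ)+2)*ε) : ℝ) : EReal) < ((-(((n:ℝ)+1)*ε) : ℝ) : EReal) := h3
        _ ≤ -G T f x := by rw [EReal.coe_neg]; exact h2
        _ ≤ G T (-f) x := h1
    obtain ⟨β, hβ1, hβ2⟩ := (lt_G_iff T (-f) x (-(((n:ℝ)+2)*ε))).mp hG'
    obtain ⟨k, hk1, hk2⟩ := (frequently_atTop.mp hβ2) 1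
    refine ⟨k, lt_of_le_of_lt ?_ hk2⟩
    have : (0:ℝ) < k := by exact_mod_cast hk1
    nlinarith

end BirkhoffAux

namespace BirkhoffAux

variable {X : Type*} [MeasurableSpace X] {μ : Measure X} {T : X → X} {f : X → ℝ}

lemma slice_abs_bound (hT : MeasurePreserving T μ μ) [IsProbabilityMeasure μ]
    (hfm : Measurable f) (hf : Integrable f μ) {ε : ℝ} (hε : 0 < ε) (n : ℤ) :
    (|(n : ℝ)| + 1) * ε * (μ (slice T f ε n)).toReal
      ≤ ∫ x in slice T f ε n, |f x| ∂μ + 3 * ε * (μ (slice T f ε n)).toReal := by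
  have hlow := slice_lower hT hfm hf ε n
  have hupp := slice_upper hT hfm hf hε n
  set A := slice T f ε n with hA
  set m := (μ A).toReal with hm
  have hm0 : 0 ≤ m := ENNReal.toReal_nonneg
  have habs : ∫ x in A, f x ∂μ ≤ ∫ x in A, |f x| ∂μ :=
    setIntegral_mono_on hf.integrableOn hf.abs.integrableOn
      (slice_meas hT.measurable hfm ε n) fun x _ => le_abs_self _
  have habs2 : -∫ x in A, |f x| ∂μ ≤ ∫ x in A, f x ∂μ := by
    have h1 : |∫ x in A, f x ∂μ| ≤ ∫ x in A, |f x| ∂μ := by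
      have := norm_integral_le_integral_norm (μ := μ.restrict A) (f := f)
      simpa [Real.norm_eq_abs] using this
    have h2 := neg_abs_le (∫ x in A, f x ∂μ)
    linarith
  rcases le_or_gt 0 (n : ℝ) with hn | hn
  · rw [abs_of_nonneg hn]
    nlinarith
  · rw [abs_of_neg hn]
    nlinarith

lemma integrable_G_toReal (hT : MeasurePreserving T μ μ) [IsProbabilityMeasure μ]
    (hfm : Measurable f) (hf : Integrable f μ) :
    Integrable (fun x => (G T f x).toReal) μ := by
  have hGm : Measurable fun x => (G T f x).toReal :=
    measurable_ereal_toReal.comp (measurable_G hT.measurable hfm)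
  refine ⟨hGm.aestronglyMeasurable, ?_⟩
  rw [hasFiniteIntegral_iff_norm]
  set A := slice T f (1:ℝ)
  have hAm : ∀ n, MeasurableSet (A n) := slice_meas hT.measurable hfm 1
  have hAd : Pairwise (Function.onFun Disjoint A) := slice_disj one_pos
  have hUae : (⋃ n : ℤ, A n) =ᵐ[μ] Set.univ := slice_union_ae hT hfm hf one_pos
  have h0 : ∫⁻ x, ENNReal.ofReal ‖(G T f x).toReal‖ ∂μ
      = ∫⁻ x in ⋃ n : ℤ, A n, ENNReal.ofReal ‖(G T f x).toReal‖ ∂μ := by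
    rw [Measure.restrict_congr_set hUae, Measure.restrict_univ]
  rw [h0, lintegral_iUnion hAm hAd]
  have hper : ∀ n : ℤ, ∫⁻ x in A n, ENNReal.ofReal ‖(G T f x).toReal‖ ∂μ
      ≤ ∫⁻ x in A n, ENNReal.ofReal |f x| ∂μ + ENNReal.ofReal 3 * μ (A n) := by
    intro n
    set m := (μ (A n)).toReal with hm
    have hmne : μ (A n) ≠ ⊤ := measure_ne_top μ _
    have step1 : ∫⁻ x in A n, ENNReal.ofReal ‖(G T f x).toReal‖ ∂μ
        ≤ ENNReal.ofReal (|(n:ℝ)| + 1) * μ (A n) := by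
      rw [← setLIntegral_const (A n) (ENNReal.ofReal (|(n:ℝ)| + 1))]
      apply setLIntegral_mono measurable_const
      intro x hx
      apply ENNReal.ofReal_le_ofReal
      rw [Real.norm_eq_abs]
      obtain ⟨h1, h2⟩ := slice_toReal_bounds hx
      rw [abs_le]
      constructor
      · have : -|(n:ℝ)| ≤ (n:ℝ) := neg_abs_le _
        nlinarith
      · have : (n:ℝ) ≤ |(n:ℝ)| := le_abs_self _
        nlinarith
    have step2 : ENNReal.ofReal (|(n:ℝ)| + 1) * μ (A n)
        ≤ ∫⁻ x in A n, ENNReal.ofReal |f x| ∂μ + ENNReal.ofReal 3 * μ (A n) := by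
      have hreal := slice_abs_bound hT hfm hf one_pos n
      rw [mul_one, mul_one] at hreal
      have hofr : ∫⁻ x in A n, ENNReal.ofReal |f x| ∂μ = ENNReal.ofReal (∫ x in A n, |f x| ∂μ) := by
        rw [ofReal_integral_eq_lintegral_ofReal hf.abs.integrableOn
          (Eventually.of_forall fun x => abs_nonneg _)]
      rw [hofr]
      calc ENNReal.ofReal (|(n:ℝ)| + 1) * μ (A n)
          = ENNReal.ofReal ((|(n:ℝ)| + 1) * m) := by
            rw [← ENNReal.ofReal_toReal hmne, ← hm, ← ENNReal.ofReal_mul (by positivity)]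
        _ ≤ ENNReal.ofReal (∫ x in A n, |f x| ∂μ + 3 * m) := ENNReal.ofReal_le_ofReal hreal
        _ ≤ ENNReal.ofReal (∫ x in A n, |f x| ∂μ) + ENNReal.ofReal (3 * m) :=
            ENNReal.ofReal_add_le
        _ = ENNReal.ofReal (∫ x in A n, |f x| ∂μ) + ENNReal.ofReal 3 * μ (A n) := by
            rw [ENNReal.ofReal_mul (by norm_num), hm, ENNReal.ofReal_toReal hmne]
    exact step1.trans step2
  calc ∑' n : ℤ, ∫⁻ x in A n, ENNReal.ofReal ‖(G T f x).toReal‖ ∂μ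
      ≤ ∑' n : ℤ, (∫⁻ x in A n, ENNReal.ofReal |f x| ∂μ + ENNReal.ofReal 3 * μ (A n)) :=
        ENNReal.tsum_le_tsum hper
    _ = (∑' n : ℤ, ∫⁻ x in A n, ENNReal.ofReal |f x| ∂μ)
        + ∑' n : ℤ, ENNReal.ofReal 3 * μ (A n) := ENNReal.tsum_add
    _ = (∫⁻ x in ⋃ n : ℤ, A n, ENNReal.ofReal |f x| ∂μ)
        + ENNReal.ofReal 3 * ∑' n : ℤ, μ (A n) := by
          rw [lintegral_iUnion hAm hAd, ENNReal.tsum_mul_left]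
    _ ≤ (∫⁻ x, ENNReal.ofReal |f x| ∂μ) + ENNReal.ofReal 3 * μ (⋃ n : ℤ, A n) := by
          apply add_le_add (setLIntegral_le_lintegral _ _)
          rw [measure_iUnion hAd hAm]
    _ < ⊤ := by
          apply ENNReal.add_lt_top.mpr
          constructor
          · have := hf.abs.hasFiniteIntegral
            rw [hasFiniteIntegral_iff_norm] at this
            simpa [Real.norm_eq_abs, abs_abs] using this
          · exact ENNReal.mul_lt_top ENNReal.ofReal_lt_top (measure_lt_top μ _)

end BirkhoffAux

namespace BirkhoffAux

variable {X : Type*} [MeasurableSpace X] {μ : Measure X} {T : X → X} {f : X → ℝ}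

lemma integral_G_le (hT : MeasurePreserving T μ μ) [IsProbabilityMeasure μ]
    (hfm : Measurable f) (hf : Integrable f μ) {ε : ℝ} (hε : 0 < ε) :
    ∫ x, (G T f x).toReal ∂μ ≤ ∫ x, f x ∂μ + ε := by
  have hGint := integrable_G_toReal hT hfm hf
  set A := slice T f ε
  have hAm : ∀ n, MeasurableSet (A n) := slice_meas hT.measurable hfm ε
  have hAd : Pairwise (Function.onFun Disjoint A) := slice_disj hε
  have hUae : (⋃ n : ℤ, A n) =ᵐ[μ] Set.univ := slice_union_ae hT hfm hf hε
  have hG : HasSum (fun n : ℤ => ∫ x in A n, (G T f x).toReal ∂μ)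
      (∫ x in ⋃ n : ℤ, A n, (G T f x).toReal ∂μ) :=
    hasSum_integral_iUnion hAm hAd hGint.integrableOn
  have hF : HasSum (fun n : ℤ => ∫ x in A n, f x ∂μ) (∫ x in ⋃ n : ℤ, A n, f x ∂μ) :=
    hasSum_integral_iUnion hAm hAd hf.integrableOn
  have hOne : HasSum (fun n : ℤ => ∫ x in A n, (1:ℝ) ∂μ) (∫ x in ⋃ n : ℤ, A n, (1:ℝ) ∂μ) :=
    hasSum_integral_iUnion hAm hAd (integrable_const (1:ℝ)).integrableOn
  have hper : ∀ n : ℤ, ∫ x in A n, (G T f x).toReal ∂μ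
      ≤ ∫ x in A n, f x ∂μ + ε * ∫ x in A n, (1:ℝ) ∂μ := by
    intro n
    have hub : ∫ x in A n, (G T f x).toReal ∂μ ≤ ((n:ℝ)+1)*ε*(μ (A n)).toReal := by
      have := setIntegral_mono_on hGint.integrableOn
        (integrableOn_const (measure_ne_top μ (A n))) (hAm n)
        (fun x hx => (slice_toReal_bounds hx).2)
      rw [setIntegral_const] at this
      calc ∫ x in A n, (G T f x).toReal ∂μ ≤ (μ (A n)).toReal • (((n:ℝ)+1)*ε) := this
        _ = ((n:ℝ)+1)*ε*(μ (A n)).toReal := by rw [smul_eq_mul]; ring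
    have hlow := slice_lower hT hfm hf ε n
    have h1 : ∫ x in A n, (1:ℝ) ∂μ = (μ (A n)).toReal := by
      rw [setIntegral_const, smul_eq_mul, mul_one]; rfl
    rw [h1]
    have : ((n:ℝ)+1)*ε*(μ (A n)).toReal
        = (n:ℝ)*ε*(μ (A n)).toReal + ε*(μ (A n)).toReal := by ring
    rw [this] at hub
    linarith
  have hR : HasSum (fun n : ℤ => ∫ x in A n, f x ∂μ + ε * ∫ x in A n, (1:ℝ) ∂μ)
      ((∫ x in ⋃ n : ℤ, A n, f x ∂μ) + ε * ∫ x in ⋃ n : ℤ, A n, (1:ℝ) ∂μ) :=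
    hF.add (hOne.mul_left ε)
  have hsum_le := hG.tsum_eq ▸ hR.tsum_eq ▸ Summable.tsum_le_tsum hper hG.summable hR.summable
  have hUG : ∫ x in ⋃ n : ℤ, A n, (G T f x).toReal ∂μ = ∫ x, (G T f x).toReal ∂μ := by
    rw [setIntegral_congr_set hUae, setIntegral_univ]
  have hUF : ∫ x in ⋃ n : ℤ, A n, f x ∂μ = ∫ x, f x ∂μ := by
    rw [setIntegral_congr_set hUae, setIntegral_univ]
  have hU1 : ∫ x in ⋃ n : ℤ, A n, (1:ℝ) ∂μ ≤ 1 := by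
    rw [setIntegral_const, smul_eq_mul, mul_one]
    exact ENNReal.toReal_le_of_le_ofReal one_pos.le (by simpa using prob_le_one)
  have hU1' : 0 ≤ ∫ x in ⋃ n : ℤ, A n, (1:ℝ) ∂μ := by
    rw [setIntegral_const, smul_eq_mul, mul_one]
    exact ENNReal.toReal_nonneg
  rw [hUG, hUF] at hsum_le
  nlinarith

lemma main_meas (hT : MeasurePreserving T μ μ) [IsProbabilityMeasure μ]
    (hfm : Measurable f) (hf : Integrable f μ) :
    μ {x | G T f x = ⊤} = 0 ∧ μ {x | G T f x = ⊥} = 0 ∧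
      Integrable (fun x => (G T f x).toReal) μ ∧
      ∫ x, (G T f x).toReal ∂μ ≤ ∫ x, f x ∂μ := by
  refine ⟨G_top_null hT hfm hf, G_bot_null hT hfm hf, integrable_G_toReal hT hfm hf, ?_⟩
  by_contra hcon
  push_neg at hcon
  have hε : 0 < (∫ x, (G T f x).toReal ∂μ - ∫ x, f x ∂μ)/2 := by linarith
  have := integral_G_le hT hfm hf hε
  linarith

end BirkhoffAux

open BirkhoffAux in
/-- If `T` preserves the probability measure `μ` and `f ∈ L¹(μ)`, then
`Ā = limsup_{k→∞} A_k f` (computed in the extended reals) is finite a.e.,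
integrable, and `∫ Ā dμ ≤ ∫ f dμ`. -/
theorem limsup_birkhoffAverage_integrable_and_le
    {X : Type*} [MeasurableSpace X] (μ : Measure X) [IsProbabilityMeasure μ]
    (T : X → X) (hT : MeasurePreserving T μ μ)
    (f : X → ℝ) (hf : Integrable f μ) :
    (∀ᵐ x ∂μ,
        limsup (fun k => ((birkhoffAverage ℝ T f k x : ℝ) : EReal)) atTop ≠ ⊤ ∧
        limsup (fun k => ((birkhoffAverage ℝ T f k x : ℝ) : EReal)) atTop ≠ ⊥) ∧
      Integrable (fun x =>
        (limsup (fun k => ((birkhoffAverage ℝ T f k x : ℝ) : EReal)) atTop).toReal) μ ∧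
      ∫ x, (limsup (fun k => ((birkhoffAverage ℝ T f k x : ℝ) : EReal)) atTop).toReal ∂μ
        ≤ ∫ x, f x ∂μ := by
  classical
  set f' := hf.1.mk f with hf'def
  have hf'sm : StronglyMeasurable f' := hf.1.stronglyMeasurable_mk
  have hf'm : Measurable f' := hf'sm.measurable
  have hae : f =ᵐ[μ] f' := hf.1.ae_eq_mk
  have hf' : Integrable f' μ := hf.congr hae
  have hiter : ∀ᵐ x ∂μ, ∀ i : ℕ, f (T^[i] x) = f' (T^[i] x) := by
    rw [ae_all_iff]
    intro i
    exact ae_eq_comp (hT.iterate i).measurable.aemeasurable (by rwa [(hT.iterate i).map_eq])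
  have hGae : (fun x => limsup (fun k => ((birkhoffAverage ℝ T f k x : ℝ) : EReal)) atTop)
      =ᵐ[μ] G T f' := by
    filter_upwards [hiter] with x hx
    have hk : ∀ k, birkhoffAverage ℝ T f k x = birkhoffAverage ℝ T f' k x := by
      intro k
      unfold birkhoffAverage birkhoffSum
      congr 1
      exact Finset.sum_congr rfl fun i _ => hx i
    rw [G]
    congr 1
    funext k
    rw [hk k]
  obtain ⟨htop, hbot, hint, hle⟩ := main_meas hT hf'm hf'
  have haetop : ∀ᵐ x ∂μ, G T f' x ≠ ⊤ := by
    rw [ae_iff]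
    simpa using htop
  have haebot : ∀ᵐ x ∂μ, G T f' x ≠ ⊥ := by
    rw [ae_iff]
    simpa using hbot
  refine ⟨?_, ?_, ?_⟩
  · filter_upwards [hGae, haetop, haebot] with x h1 h2 h3
    rw [h1]
    exact ⟨h2, h3⟩
  · apply hint.congr
    symm
    filter_upwards [hGae] with x h1
    rw [h1]
  · have heq : ∫ x, (limsup (fun k => ((birkhoffAverage ℝ T f k x : ℝ) : EReal)) atTop).toReal ∂μ
        = ∫ x, (G T f' x).toReal ∂μ := by
      apply integral_congr_ae
      filter_upwards [hGae] with x h1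
      rw [h1]
    rw [heq]
    calc ∫ x, (G T f' x).toReal ∂μ ≤ ∫ x, f' x ∂μ := hle
      _ = ∫ x, f x ∂μ := integral_congr_ae hae.symm
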